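/- Let e(λ) = Σᵢ xᵢ²/(λ−aᵢ) with canonical {π_i,x_j} = δ_{ij}, and let H̃₁ = ¼|π×x|² − ⟨x,Bx⟩(γ+δ⟨x,Bx⟩) + δ⟨x,A^∨x⟩ restricted to |x| = 1, ⟨x,π⟩ = 0. Define u₁,u₂ as the roots of e(λ) = 0 and v_j = −½ Σᵢ xᵢπᵢ/(u_j − aᵢ). Then the separated equations hold: v_j² + P̃₃(u_j)/det(u_j − A) = 0 for j = 1,2, where P̃₃(λ) = δλ³ + γλ² + H̃₁λ + H̃₂ and H̃₂ = −¼⟨π×x, A(π×x)⟩ + ⟨x,A^∨x⟩(γ+δ⟨x,Bx⟩). -/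

import Mathlib

open scoped BigOperators

def dot3 (u v : Fin 3 → ℝ) : ℝ := ∑ i, u i * v i

def cross3 (u v : Fin 3 → ℝ) : Fin 3 → ℝ :=
  ![u 1 * v 2 - u 2 * v 1, u 2 * v 0 - u 0 * v 2, u 0 * v 1 - u 1 * v 0]

/-- H̃₁ = ¼|π×x|² − ⟨x,Bx⟩(γ+δ⟨x,Bx⟩) + δ⟨x,A^∨x⟩. -/
noncomputable def Ht1 (a : Fin 3 → ℝ) (γ δ : ℝ) (x π : Fin 3 → ℝ) : ℝ :=
  (1/4) * dot3 (cross3 π x) (cross3 π x)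
  - dot3 x (fun i => (a (i+1) + a (i+2)) * x i) *
      (γ + δ * dot3 x (fun i => (a (i+1) + a (i+2)) * x i))
  + δ * dot3 x (fun i => (a (i+1) * a (i+2)) * x i)

/-- H̃₂ = −¼⟨π×x, A(π×x)⟩ + ⟨x,A^∨x⟩(γ+δ⟨x,Bx⟩). -/
noncomputable def Ht2 (a : Fin 3 → ℝ) (γ δ : ℝ) (x π : Fin 3 → ℝ) : ℝ :=
  -(1/4) * dot3 (cross3 π x) (fun i => a i * cross3 π x i)
  + dot3 x (fun i => (a (i+1) * a (i+2)) * x i) *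
      (γ + δ * dot3 x (fun i => (a (i+1) + a (i+2)) * x i))

set_option maxRecDepth 8000 in
/-- Separated equations: if u₁,u₂ are the roots of e(λ) = Σᵢ xᵢ²/(λ−aᵢ) and
v_j = −½Σᵢ xᵢπᵢ/(u_j−aᵢ), then v_j² + P̃₃(u_j)/det(u_j−A) = 0, where
P̃₃(λ) = δλ³ + γλ² + H̃₁λ + H̃₂. -/
theorem separated_equations (a : Fin 3 → ℝ) (hdist : ∀ i j, i ≠ j → a i ≠ a j)
    (γ δ : ℝ) (x π : Fin 3 → ℝ)
    (hx : dot3 x x = 1) (hxπ : dot3 x π = 0)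
    (u : Fin 2 → ℝ) (hua : ∀ j i, u j ≠ a i)
    (hroot : ∀ j, (∑ i, x i ^ 2 / (u j - a i)) = 0) (j : Fin 2) :
    (-(1/2) * ∑ i, x i * π i / (u j - a i)) ^ 2
      + (δ * u j ^ 3 + γ * u j ^ 2 + Ht1 a γ δ x π * u j + Ht2 a γ δ x π)
        / ∏ i, (u j - a i) = 0 := by

  have h0 : u j - a 0 ≠ 0 := sub_ne_zero.mpr (hua j 0)
  have h1 : u j - a 1 ≠ 0 := sub_ne_zero.mpr (hua j 1)
  have h2 : u j - a 2 ≠ 0 := sub_ne_zero.mpr (hua j 2)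
  have hx' : x 0 * x 0 + x 1 * x 1 + x 2 * x 2 = 1 := by
    have h := hx; rw [dot3, Fin.sum_univ_three] at h; exact h
  have hr := hroot j
  rw [Fin.sum_univ_three] at hr
  have hK : x 0 ^ 2 * ((u j - a 1) * (u j - a 2)) + x 1 ^ 2 * ((u j - a 0) * (u j - a 2))
      + x 2 ^ 2 * ((u j - a 0) * (u j - a 1)) = 0 := by
    have e : x 0 ^ 2 * ((u j - a 1) * (u j - a 2)) + x 1 ^ 2 * ((u j - a 0) * (u j - a 2))
        + x 2 ^ 2 * ((u j - a 0) * (u j - a 1))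
        = (x 0 ^ 2 / (u j - a 0) + x 1 ^ 2 / (u j - a 1) + x 2 ^ 2 / (u j - a 2))
          * ((u j - a 0) * ((u j - a 1) * (u j - a 2))) := by
      field_simp
    rw [e, hr, zero_mul]
  have key : (-(1/2) * (x 0 * π 0 * ((u j - a 1) * (u j - a 2))
        + x 1 * π 1 * ((u j - a 0) * (u j - a 2))
        + x 2 * π 2 * ((u j - a 0) * (u j - a 1)))) ^ 2
      + (δ * u j ^ 3 + γ * u j ^ 2 + Ht1 a γ δ x π * u j + Ht2 a γ δ x π)
        * ((u j - a 0) * ((u j - a 1) * (u j - a 2))) = 0 := by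
    simp only [Ht1, Ht2, dot3, cross3, Fin.sum_univ_three, Fin.isValue,
      Matrix.cons_val_zero, Matrix.cons_val_one, Matrix.head_cons,
      Matrix.cons_val_two, Matrix.tail_cons, Fin.reduceAdd]
    linear_combination
      ((1/4) * (π 0 ^ 2 * ((u j - a 1) * (u j - a 2)) + π 1 ^ 2 * ((u j - a 0) * (u j - a 2))
          + π 2 ^ 2 * ((u j - a 0) * (u j - a 1)))
        + (γ + δ * (u j + (x 0 ^ 2 * (a 1 + a 2) + x 1 ^ 2 * (a 2 + a 0) + x 2 ^ 2 * (a 0 + a 1))))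
          * ((u j - a 0) * ((u j - a 1) * (u j - a 2)))) * hK
      - ((γ + δ * (u j + (x 0 ^ 2 * (a 1 + a 2) + x 1 ^ 2 * (a 2 + a 0) + x 2 ^ 2 * (a 0 + a 1))))
          * u j ^ 2 * ((u j - a 0) * ((u j - a 1) * (u j - a 2)))) * hx'
  have hgoal : (-(1/2) * ∑ i, x i * π i / (u j - a i)) ^ 2
      + (δ * u j ^ 3 + γ * u j ^ 2 + Ht1 a γ δ x π * u j + Ht2 a γ δ x π)
        / ∏ i, (u j - a i)
      = ((-(1/2) * (x 0 * π 0 * ((u j - a 1) * (u j - a 2))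
        + x 1 * π 1 * ((u j - a 0) * (u j - a 2))
        + x 2 * π 2 * ((u j - a 0) * (u j - a 1)))) ^ 2
      + (δ * u j ^ 3 + γ * u j ^ 2 + Ht1 a γ δ x π * u j + Ht2 a γ δ x π)
        * ((u j - a 0) * ((u j - a 1) * (u j - a 2))))
        / (((u j - a 0) * ((u j - a 1) * (u j - a 2))) ^ 2) := by
    rw [Fin.sum_univ_three, Fin.prod_univ_three]
    field_simp
  rw [hgoal, key, zero_div]
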